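/- Let a_1, a_2, a_3, a_4 > 0 and let Q be the 10×4 real matrix whose transpose has columns indexed 1..10 given by: column 1 = (a_2+a_3+a_4, −a_1+a_3+a_4, −(a_1+a_2), −(a_1+a_2)), column 2 = (a_2+a_3, −a_1+a_3, −(a_1+a_2), 0), column 3 = (0, a_3+a_4, −a_2+a_4, −(a_2+a_3)), column 4 = (a_3+a_4, a_3+a_4, −(a_1+a_2)+a_4, −(a_1+a_2+a_3)), column 5 = (0, a_4, a_4, −(a_2+a_3)), column 6 = (a_3+a_4, a_3+a_4, −(a_1+a_2), −(a_1+a_2)), column 7 = (a_2+a_3, −a_1, −a_1, 0), column 8 = (0, −(a_3+a_4), a_2, a_2), column 9 = (−a_3, −a_3, a_1+a_2, 0), column 10 = (−(a_2+a_3+a_4), a_1−a_4, a_1−a_4, a_1+a_2+a_3). Then Σ_{i=1}^{4} a_i R_i(Q) = 0, where R_i(Q) denotes the i-th column of the transpose of Q; consequently Q has rank exactly 3. -/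

import Mathlib

open Finset

private lemma finL_2_3 : (2:Fin 3) = (1:Fin 2).succ := rfl
private lemma finL_2_4 : (2:Fin 4) = (1:Fin 3).succ := rfl
private lemma finL_3_4 : (3:Fin 4) = (2:Fin 3).succ := rfl
private lemma finL_2_5 : (2:Fin 5) = (1:Fin 4).succ := rfl
private lemma finL_3_5 : (3:Fin 5) = (2:Fin 4).succ := rfl
private lemma finL_4_5 : (4:Fin 5) = (3:Fin 4).succ := rfl
private lemma finL_2_6 : (2:Fin 6) = (1:Fin 5).succ := rfl
private lemma finL_3_6 : (3:Fin 6) = (2:Fin 5).succ := rfl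
private lemma finL_4_6 : (4:Fin 6) = (3:Fin 5).succ := rfl
private lemma finL_5_6 : (5:Fin 6) = (4:Fin 5).succ := rfl
private lemma finL_2_7 : (2:Fin 7) = (1:Fin 6).succ := rfl
private lemma finL_3_7 : (3:Fin 7) = (2:Fin 6).succ := rfl
private lemma finL_4_7 : (4:Fin 7) = (3:Fin 6).succ := rfl
private lemma finL_5_7 : (5:Fin 7) = (4:Fin 6).succ := rfl
private lemma finL_6_7 : (6:Fin 7) = (5:Fin 6).succ := rfl
private lemma finL_2_8 : (2:Fin 8) = (1:Fin 7).succ := rfl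
private lemma finL_3_8 : (3:Fin 8) = (2:Fin 7).succ := rfl
private lemma finL_4_8 : (4:Fin 8) = (3:Fin 7).succ := rfl
private lemma finL_5_8 : (5:Fin 8) = (4:Fin 7).succ := rfl
private lemma finL_6_8 : (6:Fin 8) = (5:Fin 7).succ := rfl
private lemma finL_7_8 : (7:Fin 8) = (6:Fin 7).succ := rfl
private lemma finL_2_9 : (2:Fin 9) = (1:Fin 8).succ := rfl
private lemma finL_3_9 : (3:Fin 9) = (2:Fin 8).succ := rfl
private lemma finL_4_9 : (4:Fin 9) = (3:Fin 8).succ := rfl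
private lemma finL_5_9 : (5:Fin 9) = (4:Fin 8).succ := rfl
private lemma finL_6_9 : (6:Fin 9) = (5:Fin 8).succ := rfl
private lemma finL_7_9 : (7:Fin 9) = (6:Fin 8).succ := rfl
private lemma finL_8_9 : (8:Fin 9) = (7:Fin 8).succ := rfl
private lemma finL_2_10 : (2:Fin 10) = (1:Fin 9).succ := rfl
private lemma finL_3_10 : (3:Fin 10) = (2:Fin 9).succ := rfl
private lemma finL_4_10 : (4:Fin 10) = (3:Fin 9).succ := rfl
private lemma finL_5_10 : (5:Fin 10) = (4:Fin 9).succ := rfl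
private lemma finL_6_10 : (6:Fin 10) = (5:Fin 9).succ := rfl
private lemma finL_7_10 : (7:Fin 10) = (6:Fin 9).succ := rfl
private lemma finL_8_10 : (8:Fin 10) = (7:Fin 9).succ := rfl
private lemma finL_9_10 : (9:Fin 10) = (8:Fin 9).succ := rfl

attribute [local simp] finL_2_3 finL_2_4 finL_3_4 finL_2_5 finL_3_5 finL_4_5 finL_2_6 finL_3_6 finL_4_6 finL_5_6 finL_2_7 finL_3_7 finL_4_7 finL_5_7 finL_6_7 finL_2_8 finL_3_8 finL_4_8 finL_5_8 finL_6_8 finL_7_8 finL_2_9 finL_3_9 finL_4_9 finL_5_9 finL_6_9 finL_7_9 finL_8_9 finL_2_10 finL_3_10 finL_4_10 finL_5_10 finL_6_10 finL_7_10 finL_8_10 finL_9_10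

@[simp] private lemma of_of_mat {m n α : Type*} (M : Matrix m n α) : Matrix.of (M : m → n → α) = M := rfl

set_option maxHeartbeats 1600000 in
/-- The 10×4 coefficient matrix `Q` of the pentagonal deviation vector satisfies the
linear relation `Σ aᵢ Rᵢ(Q) = 0` among its columns (the rows of `ᵗQ`), and has rank
exactly 3. Here `Qt = ᵗQ` is given explicitly as a 4×10 matrix. -/
theorem stmt_5 (a₁ a₂ a₃ a₄ : ℝ) (h₁ : 0 < a₁) (h₂ : 0 < a₂) (h₃ : 0 < a₃) (h₄ : 0 < a₄)
    (Qt : Matrix (Fin 4) (Fin 10) ℝ)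
    (hQt : Qt = Matrix.of
      !![a₂+a₃+a₄, a₂+a₃, 0, a₃+a₄, 0, a₃+a₄, a₂+a₃, 0, -a₃, -(a₂+a₃+a₄);
         -a₁+a₃+a₄, -a₁+a₃, a₃+a₄, a₃+a₄, a₄, a₃+a₄, -a₁, -(a₃+a₄), -a₃, a₁-a₄;
         -(a₁+a₂), -(a₁+a₂), -a₂+a₄, -(a₁+a₂)+a₄, a₄, -(a₁+a₂), -a₁, a₂, a₁+a₂, a₁-a₄;
         -(a₁+a₂), 0, -(a₂+a₃), -(a₁+a₂+a₃), -(a₂+a₃), -(a₁+a₂), 0, a₂, 0, a₁+a₂+a₃]) :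
    (∀ j : Fin 10, ∑ i : Fin 4, ![a₁, a₂, a₃, a₄] i * Qt i j = 0) ∧ Qt.rank = 3 := by
  subst hQt
  constructor
  · intro j
    fin_cases j <;>
      simp [Fin.sum_univ_succ, Matrix.cons_val_succ] <;> ring
  · have ha₁ : a₁ ≠ 0 := ne_of_gt h₁
    set Qt : Matrix (Fin 4) (Fin 10) ℝ := Matrix.of
      !![a₂+a₃+a₄, a₂+a₃, 0, a₃+a₄, 0, a₃+a₄, a₂+a₃, 0, -a₃, -(a₂+a₃+a₄);
         -a₁+a₃+a₄, -a₁+a₃, a₃+a₄, a₃+a₄, a₄, a₃+a₄, -a₁, -(a₃+a₄), -a₃, a₁-a₄;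
         -(a₁+a₂), -(a₁+a₂), -a₂+a₄, -(a₁+a₂)+a₄, a₄, -(a₁+a₂), -a₁, a₂, a₁+a₂, a₁-a₄;
         -(a₁+a₂), 0, -(a₂+a₃), -(a₁+a₂+a₃), -(a₂+a₃), -(a₁+a₂), 0, a₂, 0, a₁+a₂+a₃] with hQ
    have hle : Qt.rank ≤ 3 := by
      have hfac : (!![a₁,0,0,0; 0,1,0,0; 0,0,1,0; 0,0,0,1] : Matrix (Fin 4) (Fin 4) ℝ) * Qt
          = (!![-a₂, -a₃, -a₄; 1,0,0; 0,1,0; 0,0,1] : Matrix (Fin 4) (Fin 3) ℝ) *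
            Matrix.of (!![-a₁+a₃+a₄, -a₁+a₃, a₃+a₄, a₃+a₄, a₄, a₃+a₄, -a₁, -(a₃+a₄), -a₃, a₁-a₄;
               -(a₁+a₂), -(a₁+a₂), -a₂+a₄, -(a₁+a₂)+a₄, a₄, -(a₁+a₂), -a₁, a₂, a₁+a₂, a₁-a₄;
               -(a₁+a₂), 0, -(a₂+a₃), -(a₁+a₂+a₃), -(a₂+a₃), -(a₁+a₂), 0, a₂, 0, a₁+a₂+a₃]) := by
        ext i j
        fin_cases i <;> fin_cases j <;>
          simp [hQ, Matrix.mul_apply, Fin.sum_univ_succ, Matrix.cons_val_succ, Matrix.vecHead, Matrix.vecTail] <;> ring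
      have hDdet : IsUnit (!![a₁,0,0,0; 0,1,0,0; 0,0,1,0; 0,0,0,1] : Matrix (Fin 4) (Fin 4) ℝ).det := by
        have : (!![a₁,0,0,0; 0,1,0,0; 0,0,1,0; 0,0,0,1] : Matrix (Fin 4) (Fin 4) ℝ).det = a₁ := by
          simp [Matrix.det_succ_row_zero, Fin.sum_univ_succ, Matrix.cons_val_succ]
        rw [this]
        exact isUnit_iff_ne_zero.mpr ha₁
      have h1 := Matrix.rank_mul_eq_right_of_isUnit_det
        (!![a₁,0,0,0; 0,1,0,0; 0,0,1,0; 0,0,0,1] : Matrix (Fin 4) (Fin 4) ℝ) Qt hDdet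
      rw [← h1, hfac]
      exact (Matrix.rank_mul_le_right _ _).trans
        ((Matrix.rank_le_card_height _).trans (by simp))
    have hge : 3 ≤ Qt.rank := by
      set E : Matrix (Fin 3) (Fin 4) ℝ := !![1,0,0,0; 0,1,0,0; 0,0,1,0] with hE
      set F : Matrix (Fin 10) (Fin 3) ℝ :=
        Matrix.of !![0,0,0; 0,0,0; 0,0,0; 1,0,0; 0,1,0; 0,0,0; 0,0,0; 0,0,1; 0,0,0; 0,0,0]
        with hF
      have hM : E * Qt * F = !![a₃+a₄, 0, 0; a₃+a₄, a₄, -(a₃+a₄); -(a₁+a₂)+a₄, a₄, a₂] := by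
        ext i j
        fin_cases i <;> fin_cases j <;>
          simp [hQ, hE, hF, Matrix.mul_apply, Fin.sum_univ_succ, Matrix.cons_val_succ,
            Matrix.vecHead, Matrix.vecTail]
      have hdet : (E * Qt * F).det ≠ 0 := by
        rw [hM]
        have hd : (!![a₃+a₄, 0, 0; a₃+a₄, a₄, -(a₃+a₄); -(a₁+a₂)+a₄, a₄, a₂] :
            Matrix (Fin 3) (Fin 3) ℝ).det = (a₃+a₄) * a₄ * (a₂+a₃+a₄) := by
          simp [Matrix.det_fin_three, Matrix.cons_val_succ, Matrix.vecHead, Matrix.vecTail]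
          ring
        rw [hd]
        positivity
      have hrM : (E * Qt * F).rank = 3 := by
        have := Matrix.rank_of_isUnit (E * Qt * F)
          ((Matrix.isUnit_iff_isUnit_det _).mpr (isUnit_iff_ne_zero.mpr hdet))
        simpa using this
      calc (3 : ℕ) = (E * Qt * F).rank := hrM.symm
        _ ≤ (E * Qt).rank := Matrix.rank_mul_le_left _ _
        _ ≤ Qt.rank := Matrix.rank_mul_le_right _ _
    omega
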